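/- Let G be a group and A a symmetrical partial kG-module algebra with A idempotent, or r(A)=0, or l(A)=0. Then for all g,h ∈ G and a ∈ A: (1) g·(h·(h⁻¹·a)) ∈ ψ_{gh}(A); (2) g·(h·a) = gh·(h⁻¹·(h·a)); (3) ψ_g ψ_h = ψ_h ψ_g; (4) g·(g⁻¹·(h·a)) = h·(h⁻¹g·(g⁻¹h·a)), where ψ_g(a) = g·(g⁻¹·a). -/
import Mathlib


section PartialGroupPrelude

variable (k : Type) [Field k] (G : Type) [Group G]
variable (A : Type) [NonUnitalRing A] [Module k A] [SMulCommClass k A A] [IsScalarTower k A A]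

/-- A symmetrical partial action of the group algebra `kG` on the (possibly nonunital)
algebra `A`, written out on the grouplike elements of `kG`:
`1 · a = a`, `g · (a (h · b)) = (g · a)(gh · b)` and `g · ((h · b) a) = (gh · b)(g · a)`. -/
structure SymmPartialGAction where
  act : G → A →ₗ[k] A
  one_act : ∀ a : A, act 1 a = a
  act_mul_right : ∀ (g h : G) (a b : A), act g (a * act h b) = act g a * act (g * h) b
  act_mul_left : ∀ (g h : G) (a b : A), act g (act h b * a) = act (g * h) b * act g a

/-- The algebra `A` is idempotent: `A² = A`. -/
def IsIdempotentAlgebra : Prop :=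
  ∀ a : A, a ∈ Submodule.span k {x : A | ∃ b c : A, x = b * c}

/-- `r(A) = 0`: the right annihilator of `A` is trivial. -/
def RAnnTrivial : Prop := ∀ a : A, (∀ b : A, b * a = 0) → a = 0

/-- `l(A) = 0`: the left annihilator of `A` is trivial. -/
def LAnnTrivial : Prop := ∀ b : A, (∀ a : A, b * a = 0) → b = 0

variable {k G A}

/-- `ψ_g(a) = g · (g⁻¹ · a)`. -/
def psiMap (P : SymmPartialGAction k G A) (g : G) : A →ₗ[k] A :=
  (P.act g).comp (P.act g⁻¹)

end PartialGroupPrelude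

section Stmt6

variable {k : Type} [Field k] {G : Type} [Group G]
variable {A : Type} [NonUnitalRing A] [Module k A] [SMulCommClass k A A] [IsScalarTower k A A]

variable (P : SymmPartialGAction k G A)

lemma pact_mul (g : G) (a b : A) :
    P.act g (a * b) = P.act g a * P.act g b := by
  have h := P.act_mul_right g 1 a b
  simpa [P.one_act] using h

lemma pE1 (g : G) (a b : A) :
    P.act g (P.act g⁻¹ b * a) = b * P.act g a := by
  have h := P.act_mul_left g g⁻¹ a b
  simpa [P.one_act] using h

lemma pE2 (g : G) (a b : A) :
    P.act g (a * P.act g⁻¹ b) = P.act g a * b := by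
  have h := P.act_mul_right g g⁻¹ a b
  simpa [P.one_act] using h

lemma pE1' (g : G) (a b : A) :
    P.act g⁻¹ (P.act g b * a) = b * P.act g⁻¹ a := by
  have h := pE1 P g⁻¹ a b
  rwa [inv_inv] at h

lemma pE2' (g : G) (a b : A) :
    P.act g⁻¹ (a * P.act g b) = P.act g⁻¹ a * b := by
  have h := pE2 P g⁻¹ a b
  rwa [inv_inv] at h

lemma psiMap_apply (g : G) (a : A) :
    psiMap P g a = P.act g (P.act g⁻¹ a) := rfl

lemma psi_mul_left (g : G) (a b : A) :
    psiMap P g (a * b) = psiMap P g a * b := by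
  rw [psiMap_apply, psiMap_apply, pact_mul P g⁻¹ a b, pE2 P g (P.act g⁻¹ a) b]

lemma psi_mul_right (g : G) (a b : A) :
    psiMap P g (a * b) = a * psiMap P g b := by
  rw [psiMap_apply, psiMap_apply, pact_mul P g⁻¹ a b, pE1 P g (P.act g⁻¹ b) a]

/-- The workhorse: two linear maps agreeing on products, and whose values have equal
products with arbitrary elements on both sides, agree everywhere under the hypothesis. -/
lemma ext_aux (hA : IsIdempotentAlgebra k A ∨ RAnnTrivial A ∨ LAnnTrivial A)
    (F G : A →ₗ[k] A)
    (hprod : ∀ b c : A, F (b * c) = G (b * c))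
    (hml : ∀ b a : A, b * F a = b * G a)
    (hmr : ∀ a b : A, F a * b = G a * b) (a : A) : F a = G a := by
  rcases hA with hid | hr | hl
  · have hsub : {x : A | ∃ b c : A, x = b * c} ⊆ (LinearMap.ker (F - G) : Set A) := by
      rintro x ⟨b, c, rfl⟩
      simp only [SetLike.mem_coe, LinearMap.mem_ker, LinearMap.sub_apply, hprod b c, sub_self]
    have hmem := Submodule.span_le.mpr hsub (hid a)
    have h0 : F a - G a = 0 := by simpa using LinearMap.mem_ker.mp hmem
    exact sub_eq_zero.mp h0
  · have h : ∀ b : A, b * (F a - G a) = 0 := fun b => by rw [mul_sub, hml b a, sub_self]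
    exact sub_eq_zero.mp (hr _ h)
  · have h : ∀ b : A, (F a - G a) * b = 0 := fun b => by rw [sub_mul, hmr a b, sub_self]
    exact sub_eq_zero.mp (hl _ h)

/-- Statement (4). -/
lemma key4 (hA : IsIdempotentAlgebra k A ∨ RAnnTrivial A ∨ LAnnTrivial A)
    (g h : G) (a : A) :
    P.act g (P.act g⁻¹ (P.act h a)) = P.act h (P.act (h⁻¹ * g) (P.act (g⁻¹ * h) a)) := by
  have hprod : ∀ b c : A,
      P.act g (P.act g⁻¹ (P.act h (b * c))) =
        P.act h (P.act (h⁻¹ * g) (P.act (g⁻¹ * h) (b * c))) := by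
    intro b c
    have eL :
        P.act g (P.act g⁻¹ (P.act h (b * c))) =
          P.act h b * P.act g (P.act (g⁻¹ * h) c) := by
      rw [pact_mul P h b c, P.act_mul_right g⁻¹ h (P.act h b) c,
        pE1 P g (P.act (g⁻¹ * h) c) (P.act h b)]
    have eR :
        P.act h (P.act (h⁻¹ * g) (P.act (g⁻¹ * h) (b * c))) =
          P.act h b * P.act g (P.act (g⁻¹ * h) c) := by
      rw [pact_mul P (g⁻¹ * h) b c,
        P.act_mul_left (h⁻¹ * g) (g⁻¹ * h) (P.act (g⁻¹ * h) c) b]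
      have e1 : h⁻¹ * g * (g⁻¹ * h) = (1 : G) := by group
      rw [e1, P.one_act, P.act_mul_right h (h⁻¹ * g) b (P.act (g⁻¹ * h) c)]
      have e2 : h * (h⁻¹ * g) = g := by group
      rw [e2]
    rw [eL, eR]
  have hml : ∀ b a : A,
      b * P.act g (P.act g⁻¹ (P.act h a)) =
        b * P.act h (P.act (h⁻¹ * g) (P.act (g⁻¹ * h) a)) := by
    intro b a
    have L : b * P.act g (P.act g⁻¹ (P.act h a)) =
        P.act g (P.act g⁻¹ (P.act h (P.act h⁻¹ b * a))) := by
      rw [← pE1 P g (P.act g⁻¹ (P.act h a)) b, ← pact_mul P g⁻¹ b (P.act h a),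
        ← pE1 P h a b]
    have R : b * P.act h (P.act (h⁻¹ * g) (P.act (g⁻¹ * h) a)) =
        P.act h (P.act (h⁻¹ * g) (P.act (g⁻¹ * h) (P.act h⁻¹ b * a))) := by
      rw [← pE1 P h (P.act (h⁻¹ * g) (P.act (g⁻¹ * h) a)) b,
        ← pE1 P (h⁻¹ * g) (P.act (g⁻¹ * h) a) (P.act h⁻¹ b)]
      have e1 : (h⁻¹ * g)⁻¹ = g⁻¹ * h := by group
      rw [e1, ← pact_mul P (g⁻¹ * h) (P.act h⁻¹ b) a]
    rw [L, R]
    exact hprod _ _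
  have hmr : ∀ a b : A,
      P.act g (P.act g⁻¹ (P.act h a)) * b =
        P.act h (P.act (h⁻¹ * g) (P.act (g⁻¹ * h) a)) * b := by
    intro a b
    have L : P.act g (P.act g⁻¹ (P.act h a)) * b =
        P.act g (P.act g⁻¹ (P.act h (a * P.act h⁻¹ b))) := by
      rw [← pE2 P g (P.act g⁻¹ (P.act h a)) b, ← pact_mul P g⁻¹ (P.act h a) b,
        ← pE2 P h a b]
    have R : P.act h (P.act (h⁻¹ * g) (P.act (g⁻¹ * h) a)) * b =
        P.act h (P.act (h⁻¹ * g) (P.act (g⁻¹ * h) (a * P.act h⁻¹ b))) := by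
      rw [← pE2 P h (P.act (h⁻¹ * g) (P.act (g⁻¹ * h) a)) b,
        ← pE2 P (h⁻¹ * g) (P.act (g⁻¹ * h) a) (P.act h⁻¹ b)]
      have e1 : (h⁻¹ * g)⁻¹ = g⁻¹ * h := by group
      rw [e1, ← pact_mul P (g⁻¹ * h) a (P.act h⁻¹ b)]
    rw [L, R]
    exact hprod _ _
  exact ext_aux hA ((P.act g).comp ((P.act g⁻¹).comp (P.act h)))
    ((P.act h).comp ((P.act (h⁻¹ * g)).comp (P.act (g⁻¹ * h))))
    hprod hml hmr a

/-- Statement (3). -/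
lemma key3 (hA : IsIdempotentAlgebra k A ∨ RAnnTrivial A ∨ LAnnTrivial A)
    (g h : G) (a : A) :
    psiMap P g (psiMap P h a) = psiMap P h (psiMap P g a) := by
  have hprod : ∀ b c : A,
      psiMap P g (psiMap P h (b * c)) = psiMap P h (psiMap P g (b * c)) := by
    intro b c
    rw [psi_mul_left P h b c, psi_mul_right P g (psiMap P h b) c,
      psi_mul_right P g b c, psi_mul_left P h b (psiMap P g c)]
  have hml : ∀ b a : A,
      b * psiMap P g (psiMap P h a) = b * psiMap P h (psiMap P g a) := by
    intro b a
    rw [← psi_mul_right P g b (psiMap P h a), ← psi_mul_right P h b a,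
      ← psi_mul_right P h b (psiMap P g a), ← psi_mul_right P g b a]
    exact hprod _ _
  have hmr : ∀ a b : A,
      psiMap P g (psiMap P h a) * b = psiMap P h (psiMap P g a) * b := by
    intro a b
    rw [← psi_mul_left P g (psiMap P h a) b, ← psi_mul_left P h a b,
      ← psi_mul_left P h (psiMap P g a) b, ← psi_mul_left P g a b]
    exact hprod _ _
  exact ext_aux hA ((psiMap P g).comp (psiMap P h)) ((psiMap P h).comp (psiMap P g))
    hprod hml hmr a

/-- Statement (2). -/
lemma key2 (hA : IsIdempotentAlgebra k A ∨ RAnnTrivial A ∨ LAnnTrivial A)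
    (g h : G) (a : A) :
    P.act g (P.act h a) = P.act (g * h) (P.act h⁻¹ (P.act h a)) := by
  -- From (4): the right-hand side equals `ψ_g ((gh)·a)`.
  have hC : ∀ x : A, P.act (g * h) (P.act h⁻¹ (P.act h x)) =
      P.act g (P.act g⁻¹ (P.act (g * h) x)) := by
    intro x
    have h4 := key4 P hA g (g * h) x
    have e1 : (g * h)⁻¹ * g = h⁻¹ := by group
    have e2 : g⁻¹ * (g * h) = h := by group
    rw [e1, e2] at h4
    exact h4.symm
  have hprod : ∀ b c : A,
      P.act g (P.act h (b * c)) = P.act (g * h) (P.act h⁻¹ (P.act h (b * c))) := by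
    intro b c
    have eL : P.act g (P.act h (b * c)) = P.act (g * h) b * P.act g (P.act h c) := by
      rw [pact_mul P h b c, P.act_mul_left g h (P.act h c) b]
    have eR : P.act (g * h) (P.act h⁻¹ (P.act h (b * c))) =
        P.act (g * h) b * P.act g (P.act h c) := by
      rw [pact_mul P h b c, pE1' P h (P.act h c) b,
        P.act_mul_right (g * h) h⁻¹ b (P.act h c)]
      have e1 : g * h * h⁻¹ = g := by group
      rw [e1]
    rw [eL, eR]
  have hml : ∀ b a : A,
      b * P.act g (P.act h a) = b * P.act (g * h) (P.act h⁻¹ (P.act h a)) := by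
    intro b a
    have L : b * P.act g (P.act h a) =
        P.act g (P.act g⁻¹ b) * P.act (g * h) a := by
      rw [← pE1 P g (P.act h a) b, P.act_mul_right g h (P.act g⁻¹ b) a]
    have R : b * P.act (g * h) (P.act h⁻¹ (P.act h a)) =
        P.act g (P.act g⁻¹ b) * P.act (g * h) a := by
      rw [hC a, ← pE1 P g (P.act g⁻¹ (P.act (g * h) a)) b,
        pE2 P g (P.act g⁻¹ b) (P.act (g * h) a)]
    rw [L, R]
  have hmr : ∀ a b : A,
      P.act g (P.act h a) * b = P.act (g * h) (P.act h⁻¹ (P.act h a)) * b := by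
    intro a b
    have L : P.act g (P.act h a) * b =
        P.act (g * h) a * P.act g (P.act g⁻¹ b) := by
      rw [← pE2 P g (P.act h a) b, P.act_mul_left g h (P.act g⁻¹ b) a]
    have R : P.act (g * h) (P.act h⁻¹ (P.act h a)) * b =
        P.act (g * h) a * P.act g (P.act g⁻¹ b) := by
      rw [hC a, ← pE2 P g (P.act g⁻¹ (P.act (g * h) a)) b,
        pE1 P g (P.act g⁻¹ b) (P.act (g * h) a)]
    rw [L, R]
  exact ext_aux hA ((P.act g).comp (P.act h))
    ((P.act (g * h)).comp ((P.act h⁻¹).comp (P.act h))) hprod hml hmr a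

/-- Let `A` be a symmetrical partial `kG`-module algebra which is idempotent
or has `r(A) = 0` or `l(A) = 0`.  Then for all `g, h ∈ G`, `a ∈ A`:
(1) `g · (h · (h⁻¹ · a)) ∈ ψ_{gh}(A)`; (2) `g · (h · a) = gh · (h⁻¹ · (h · a))`;
(3) `ψ_g ψ_h = ψ_h ψ_g`; (4) `g · (g⁻¹ · (h · a)) = h · (h⁻¹g · (g⁻¹h · a))`. -/
theorem psi_lemma_nine (P : SymmPartialGAction k G A)
    (hA : IsIdempotentAlgebra k A ∨ RAnnTrivial A ∨ LAnnTrivial A)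
    (g h : G) (a : A) :
    P.act g (P.act h (P.act h⁻¹ a)) ∈ Set.range (psiMap P (g * h)) ∧
    P.act g (P.act h a) = P.act (g * h) (P.act h⁻¹ (P.act h a)) ∧
    (psiMap P g).comp (psiMap P h) = (psiMap P h).comp (psiMap P g) ∧
    P.act g (P.act g⁻¹ (P.act h a)) =
      P.act h (P.act (h⁻¹ * g) (P.act (g⁻¹ * h) a)) := by
  refine ⟨?_, key2 P hA g h a, LinearMap.ext fun x => key3 P hA g h x, key4 P hA g h a⟩
  refine ⟨P.act g a, ?_⟩
  have h4 := key4 P hA (g * h) g a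
  have e1 : g⁻¹ * (g * h) = h := by group
  have e2 : (g * h)⁻¹ * g = h⁻¹ := by group
  rw [e1, e2] at h4
  exact h4

end Stmt6
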